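/- Let a_1,…,a_q, b_1,…,b_q be reals with 0 < a_1 ≤ ⋯ ≤ a_q, 0 < b_1 ≤ ⋯ ≤ b_q and ∑_{i=1}^k a_i ≤ ∑_{i=1}^k b_i for k = 1,…,q (i.e., b weakly supermajorizes a). Then ∑_{j=1}^q (t^{a_j} − t^{b_j}) ≥ 0 for all t ∈ (0,1]. -/

import Mathlib

/-- Abel summation: if `c` is monotone and nonpositive below `n`, and all prefix
sums of `d` up to `n` are nonpositive, then `∑ c i * d i ≥ 0`. -/
lemma abel_nonneg (n : ℕ) (c d : ℕ → ℝ)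
    (hc : ∀ i j, i ≤ j → j < n → c i ≤ c j)
    (hc0 : ∀ i < n, c i ≤ 0)
    (hd : ∀ k ≤ n, ∑ i ∈ Finset.range k, d i ≤ 0) :
    0 ≤ ∑ i ∈ Finset.range n, c i * d i := by
  induction n generalizing c with
  | zero => simp
  | succ n ih =>
    have h1 : 0 ≤ ∑ i ∈ Finset.range n, (c i - c n) * d i := by
      refine ih (fun i => c i - c n) ?_ ?_ ?_
      · intro i j hij hj
        have := hc i j hij (hj.trans (Nat.lt_succ_self n))
        linarith
      · intro i hi
        have := hc i n (Nat.le_of_lt hi) (Nat.lt_succ_self n)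
        linarith
      · intro k hk
        exact hd k (hk.trans (Nat.le_succ n))
    have h2 : 0 ≤ c n * ∑ i ∈ Finset.range (n + 1), d i := by
      have h2a := hc0 n (Nat.lt_succ_self n)
      have h2b := hd (n + 1) le_rfl
      nlinarith
    have h3 : ∑ i ∈ Finset.range (n + 1), c i * d i
        = (∑ i ∈ Finset.range n, (c i - c n) * d i)
          + c n * ∑ i ∈ Finset.range (n + 1), d i := by
      rw [Finset.sum_range_succ, Finset.sum_range_succ]
      simp only [sub_mul, Finset.sum_sub_distrib, Finset.mul_sum, mul_add]
      ring
    linarith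
  
/-- Tangent line inequality for the convex function `x ↦ t^x`, `0 < t`. -/
lemma tangent_rpow {t : ℝ} (ht : 0 < t) (x y : ℝ) :
    Real.log t * t ^ y * (x - y) ≤ t ^ x - t ^ y := by
  have hx : t ^ x = Real.exp (Real.log t * x) := Real.rpow_def_of_pos ht x
  have hy : t ^ y = Real.exp (Real.log t * y) := Real.rpow_def_of_pos ht y
  have hsplit : Real.exp (Real.log t * x)
      = Real.exp (Real.log t * y) * Real.exp (Real.log t * (x - y)) := by
    rw [← Real.exp_add]; ring_nf
  have h1 : Real.log t * (x - y) + 1 ≤ Real.exp (Real.log t * (x - y)) :=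
    Real.add_one_le_exp _
  have h2 : 0 < Real.exp (Real.log t * y) := Real.exp_pos _
  rw [hx, hy, hsplit]
  nlinarith

theorem stmt16 (q : ℕ) (a b : Fin q → ℝ)
    (ha : ∀ i, 0 < a i) (hb : ∀ i, 0 < b i)
    (hamono : Monotone a) (hbmono : Monotone b)
    (hsum : ∀ k : ℕ, k ≤ q →
      (∑ i ∈ Finset.univ.filter (fun i : Fin q => (i : ℕ) < k), a i) ≤
        ∑ i ∈ Finset.univ.filter (fun i : Fin q => (i : ℕ) < k), b i) :
    ∀ t ∈ Set.Ioc (0:ℝ) 1, 0 ≤ ∑ j, (t ^ a j - t ^ b j) := by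
  intro t ht
  obtain ⟨ht0, ht1⟩ := ht
  set A : ℕ → ℝ := fun i => if h : i < q then a ⟨i, h⟩ else 0 with hA
  set B : ℕ → ℝ := fun i => if h : i < q then b ⟨i, h⟩ else 0 with hB
  set c : ℕ → ℝ := fun i => Real.log t * t ^ B i with hc
  set d : ℕ → ℝ := fun i => A i - B i with hd
  have hlog : Real.log t ≤ 0 := Real.log_nonpos (le_of_lt ht0) ht1
  -- prefix sums over range k equal the filtered Fin sums
  have hfil : ∀ (f : Fin q → ℝ) (F : ℕ → ℝ)
      (hFf : ∀ i : Fin q, F i = f i) (k : ℕ), k ≤ q →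
      (∑ i ∈ Finset.univ.filter (fun i : Fin q => (i : ℕ) < k), f i)
        = ∑ i ∈ Finset.range k, F i := by
    intro f F hFf k hk
    rw [Finset.sum_filter]
    have : (∑ i : Fin q, if (i : ℕ) < k then f i else 0)
        = ∑ i : Fin q, (fun j : ℕ => if j < k then F j else 0) (i : ℕ) := by
      apply Finset.sum_congr rfl
      intro i _
      simp only [hFf i]
    have h4 : (∑ i : Fin q, (fun j : ℕ => if j < k then F j else 0) (i : ℕ))
        = ∑ i ∈ Finset.range q, (if i < k then F i else 0) := by
      exact Fin.sum_univ_eq_sum_range (fun j => if j < k then F j else 0) q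
    rw [this, h4]
    rw [show (∑ i ∈ Finset.range q, if i < k then F i else 0)
        = ∑ i ∈ Finset.range q, if i ∈ Finset.range k then F i else 0 by
      simp [Finset.mem_range]]
    rw [Finset.sum_ite_mem, Finset.inter_comm,
      Finset.inter_eq_left.mpr (Finset.range_subset_range.mpr hk)]
  have key : 0 ≤ ∑ i ∈ Finset.range q, c i * d i := by
    apply abel_nonneg
    · intro i j hij hj
      have hi : i < q := lt_of_le_of_lt hij hj
      have hBij : B i ≤ B j := by
        simp only [hB, dif_pos hi, dif_pos hj]
        exact hbmono (by exact_mod_cast hij)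
      have : t ^ B j ≤ t ^ B i :=
        Real.rpow_le_rpow_of_exponent_ge ht0 ht1 hBij
      simp only [hc]
      exact mul_le_mul_of_nonpos_left this hlog
    · intro i _
      exact mul_nonpos_of_nonpos_of_nonneg hlog (le_of_lt (Real.rpow_pos_of_pos ht0 _))
    · intro k hk
      have hsk := hsum k hk
      have hAeq : ∀ i : Fin q, A i = a i := by
        intro i; simp [hA, i.isLt]
      have hBeq : ∀ i : Fin q, B i = b i := by
        intro i; simp [hB, i.isLt]
      rw [hfil a A hAeq k hk] at hsk
      rw [hfil b B hBeq k hk] at hsk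
      simp only [hd, Finset.sum_sub_distrib]
      linarith
  have step : ∑ i ∈ Finset.range q, c i * d i
      ≤ ∑ i ∈ Finset.range q, (t ^ A i - t ^ B i) := by
    apply Finset.sum_le_sum
    intro i _
    exact tangent_rpow ht0 (A i) (B i)
  have final : (∑ j, (t ^ a j - t ^ b j))
      = ∑ i ∈ Finset.range q, (t ^ A i - t ^ B i) := by
    rw [← Fin.sum_univ_eq_sum_range (fun i => t ^ A i - t ^ B i) q]
    apply Finset.sum_congr rfl
    intro i _
    simp [hA, hB, i.isLt]
  rw [final]
  linarith
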